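/- arXiv:2511.22564 — 3 statements merged into one kernel-verified Lean document; each statement's English description precedes it below -/
import Mathlib

section
/- Suppose E : [0,∞) → (0,∞) is differentiable and satisfies the differential inequality E'(t) ≤ c E(t) − 2ε C E(t)^{1+2/d} for all t > 0, where c, ε, C, d > 0. Then for all t > 0, E(t) ≤ ( (2εC/c)(1 − exp(−2ct/d)) )^{−d/2}. -/
/-- ODE comparison lemma for the Nash-type heat kernel bound: if
`E' ≤ c E − 2 ε C E^{1+2/d}` then `E(t) ≤ ((2εC/c)(1 − e^{−2ct/d}))^{−d/2}`. -/
theorem stmt_1 (c ε C d : ℝ) (hc : 0 < c) (hε : 0 < ε) (hC : 0 < C) (hd : 0 < d)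
    (E : ℝ → ℝ) (hEpos : ∀ t, 0 ≤ t → 0 < E t)
    (hEdiff : ∀ t, 0 ≤ t → DifferentiableAt ℝ E t)
    (hODE : ∀ t, 0 < t → deriv E t ≤ c * E t - 2 * ε * C * (E t) ^ (1 + 2 / d)) :
    ∀ t, 0 < t →
      E t ≤ ((2 * ε * C / c) * (1 - Real.exp (-(2 * c * t) / d))) ^ (-(d / 2)) := by
  intro t ht
  set k : ℝ := 2 * c / d with hk
  set M : ℝ := 2 * ε * C / c with hM
  set p : ℝ := -(2 / d) with hp
  have hkpos : 0 < k := div_pos (by linarith) hd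
  have hMpos : 0 < M := div_pos (by positivity) hc
  have hpneg : p < 0 := by
    have : 0 < 2 / d := div_pos two_pos hd
    rw [hp]; linarith
  set F : ℝ → ℝ := fun s => E s ^ p with hF
  set H : ℝ → ℝ := fun s => Real.exp (k * s) * (F s - M) with hH
  have hHderiv : ∀ s, 0 ≤ s → HasDerivAt H
      (Real.exp (k * s) * (k * (F s - M) + deriv E s * p * E s ^ (p - 1))) s := by
    intro s hs
    have hE := (hEdiff s hs).hasDerivAt
    have hFd : HasDerivAt F (deriv E s * p * E s ^ (p - 1)) s :=
      hE.rpow_const (Or.inl (ne_of_gt (hEpos s hs)))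
    have hexp : HasDerivAt (fun u => Real.exp (k * u)) (Real.exp (k * s) * k) s :=
      by simpa using ((hasDerivAt_id s).const_mul k).exp
    have := hexp.fun_mul (hFd.sub_const M)
    exact this.congr_deriv (by ring)
  have hHdiff : ∀ s, 0 ≤ s → DifferentiableAt ℝ H s := fun s hs =>
    (hHderiv s hs).differentiableAt
  have hderiv_nonneg : ∀ s, 0 < s → 0 ≤ deriv H s := by
    intro s hs
    rw [(hHderiv s hs.le).deriv]
    have hEs : 0 < E s := hEpos s hs.le
    have hEpow : 0 < E s ^ (p - 1) := Real.rpow_pos_of_pos hEs _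
    have hODEs := hODE s hs
    have hpE : p * E s ^ (p - 1) < 0 := mul_neg_of_neg_of_pos hpneg hEpow
    have key : (c * E s - 2 * ε * C * E s ^ (1 + 2 / d)) * (p * E s ^ (p - 1)) ≤
        deriv E s * (p * E s ^ (p - 1)) :=
      mul_le_mul_of_nonpos_right hODEs hpE.le
    have e1 : E s ^ (p - 1) * E s = E s ^ p := by
      rw [← Real.rpow_add_one hEs.ne' (p - 1)]
      norm_num
    have e2 : E s ^ (1 + 2 / d) * E s ^ (p - 1) = 1 := by
      rw [← Real.rpow_add hEs]
      have : 1 + 2 / d + (p - 1) = 0 := by rw [hp]; ring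
      rw [this, Real.rpow_zero]
    have hexp_pos : 0 < Real.exp (k * s) := Real.exp_pos _
    apply mul_nonneg hexp_pos.le
    have expand : (c * E s - 2 * ε * C * E s ^ (1 + 2 / d)) * (p * E s ^ (p - 1)) =
        c * p * (E s ^ p) - 2 * ε * C * p := by
      calc (c * E s - 2 * ε * C * E s ^ (1 + 2 / d)) * (p * E s ^ (p - 1))
          = c * p * (E s ^ (p - 1) * E s)
            - 2 * ε * C * p * (E s ^ (1 + 2 / d) * E s ^ (p - 1)) := by ring
        _ = c * p * (E s ^ p) - 2 * ε * C * p := by rw [e1, e2, mul_one]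
    have hcp : c * p * (E s ^ p) = -(k * F s) := by
      rw [hF, hp, hk]; ring
    have hkM : k * M = 2 * ε * C * (2 / d) := by
      rw [hk, hM]; field_simp
    have hεp : 2 * ε * C * p = -(k * M) := by
      rw [hkM, hp]; ring
    have key2 : -(k * F s) + k * M ≤ deriv E s * (p * E s ^ (p - 1)) := by
      calc -(k * F s) + k * M = c * p * (E s ^ p) - 2 * ε * C * p := by
            rw [hcp, hεp]; ring
        _ ≤ _ := by rw [← expand]; exact key
    nlinarith [key2]
  have hmono : MonotoneOn H (Set.Ici (0 : ℝ)) := by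
    apply monotoneOn_of_deriv_nonneg (convex_Ici 0)
    · exact fun s hs => (hHdiff s hs).continuousAt.continuousWithinAt
    · intro s hs
      rw [interior_Ici] at hs
      exact ((hHdiff s (le_of_lt hs)).differentiableWithinAt)
    · intro s hs
      rw [interior_Ici] at hs
      exact hderiv_nonneg s hs
  have hH0 : H 0 = F 0 - M := by simp [hH]
  have hHt : H 0 ≤ H t := hmono (Set.self_mem_Ici) (Set.mem_Ici.mpr ht.le) ht.le
  have hF0pos : 0 < F 0 := Real.rpow_pos_of_pos (hEpos 0 le_rfl) _
  have h1 : -M < Real.exp (k * t) * (F t - M) := by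
    have : F 0 - M ≤ Real.exp (k * t) * (F t - M) := by rw [← hH0]; exact hHt
    linarith
  have hexp_pos : 0 < Real.exp (k * t) := Real.exp_pos _
  have hinv : 0 < (Real.exp (k * t))⁻¹ := inv_pos.mpr hexp_pos
  have h2 : M * (1 - Real.exp (-(k * t))) < F t := by
    rw [Real.exp_neg]
    rcases le_or_gt M (F t) with h | h
    · nlinarith [mul_pos hMpos hinv]
    · have hmul := mul_lt_mul_of_pos_left h1 hinv
      have hee : (Real.exp (k * t))⁻¹ * (Real.exp (k * t) * (F t - M)) = F t - M := by
        field_simp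
      rw [hee] at hmul
      nlinarith
  have hexp_eq : -(2 * c * t) / d = -(k * t) := by rw [hk]; ring
  rw [hexp_eq]
  set R : ℝ := M * (1 - Real.exp (-(k * t))) with hR
  have hRpos : 0 < R := by
    apply mul_pos hMpos
    have : Real.exp (-(k * t)) < 1 := by
      rw [Real.exp_lt_one_iff]
      exact neg_neg_iff_pos.mpr (mul_pos hkpos ht)
    linarith
  have hEt : F t ^ (-(d / 2)) = E t := by
    rw [hF, ← Real.rpow_mul (hEpos t ht.le).le]
    have : p * -(d / 2) = 1 := by rw [hp]; field_simp
    rw [this, Real.rpow_one]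
  rw [← hEt]
  exact Real.rpow_le_rpow_of_nonpos hRpos h2.le (by linarith : -(d / 2) ≤ 0)
end

section
/- Let p̃, q̃ : X → [0,∞) be unnormalized densities with normalizations p = p̃/∫p̃, q = q̃/∫q̃ and ratio r = q/p. Given points x¹,…,x^N in X, suppose y¹,…,y^N are conditionally i.i.d. given (x¹,…,x^N), each with P(yⁱ = x^j) = r̃(x^j)/Σ_n r̃(xⁿ) where r̃ = q̃/p̃. Then for any bounded measurable h : X → ℝ and any a > 0, with probability at least 1 − 2 exp(−2Na²/‖h‖²_osc): | (1/N) Σᵢ h(yⁱ) − ∫ h q dx | ≤ ‖h − ∫ h q dx‖_∞ · |1 − (1/N) Σᵢ r(xⁱ)| + | (1/N) Σᵢ r(xⁱ)(h(xⁱ) − ∫ h q dx) | + a. -/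
open MeasureTheory ProbabilityTheory

lemma lemA_core (p : ℝ) (hp0 : 0 ≤ p) (hp1 : p ≤ 1) (t : ℝ) :
    Real.log (1 - p + p * Real.exp t) - p * t ≤ t ^ 2 / 8 := by
  set D : ℝ → ℝ := fun h => 1 - p + p * Real.exp h with hDdef
  have hDpos : ∀ h, 0 < D h := by
    intro h
    rcases eq_or_lt_of_le hp1 with h1 | h1
    · simpa [hDdef, h1] using Real.exp_pos h
    · have : 0 < 1 - p := by linarith
      have : 0 ≤ p * Real.exp h := by positivity
      simp only [hDdef]; linarith
  set g : ℝ → ℝ := fun h => h ^ 2 / 8 + p * h - Real.log (D h) with hgdef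
  set g1 : ℝ → ℝ := fun h => h / 4 + p - p * Real.exp h / D h with hg1def
  have hD : ∀ h, HasDerivAt D (p * Real.exp h) h := fun h =>
    ((Real.hasDerivAt_exp h).const_mul p).const_add (1 - p)
  have hg : ∀ h, HasDerivAt g (g1 h) h := by
    intro h
    have h1 : HasDerivAt (fun x : ℝ => x ^ 2 / 8) (2 * h ^ 1 / 8) h :=
      (hasDerivAt_pow 2 h).div_const 8
    have h2 : HasDerivAt (fun x : ℝ => p * x) (p * 1) h := (hasDerivAt_id h).const_mul p
    have h3 : HasDerivAt (fun x => Real.log (D x)) (p * Real.exp h / D h) h :=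
      (hD h).log (hDpos h).ne'
    have := (h1.add h2).sub h3
    refine this.congr_deriv ?_
    show _ = h / 4 + p - p * Real.exp h / D h; ring
  have hg1 : ∀ h, HasDerivAt g1
      (1 / 4 - (p * Real.exp h * D h - p * Real.exp h * (p * Real.exp h)) / D h ^ 2) h := by
    intro h
    have h1 : HasDerivAt (fun x : ℝ => x / 4 + p) (1 / 4) h := by
      simpa using ((hasDerivAt_id h).div_const 4).add_const p
    have h2 : HasDerivAt (fun x => p * Real.exp x / D x)
        ((p * Real.exp h * D h - p * Real.exp h * (p * Real.exp h)) / D h ^ 2) h :=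
      ((Real.hasDerivAt_exp h).const_mul p).div (hD h) (hDpos h).ne'
    exact h1.sub h2
  have hg1nonneg : ∀ h, 0 ≤ 1 / 4 - (p * Real.exp h * D h - p * Real.exp h * (p * Real.exp h)) / D h ^ 2 := by
    intro h
    rw [sub_nonneg, div_le_iff₀ (pow_pos (hDpos h) 2)]
    have hE : 0 < Real.exp h := Real.exp_pos h
    have : p * Real.exp h * D h - p * Real.exp h * (p * Real.exp h)
        = (p * Real.exp h) * (1 - p) := by simp [hDdef]; ring
    rw [this]
    nlinarith [sq_nonneg (1 - p - p * Real.exp h), mul_nonneg hp0 hE.le]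
  have hg1mono : Monotone g1 :=
    monotone_of_hasDerivAt_nonneg hg1 hg1nonneg
  have hg10 : g1 0 = 0 := by
    simp [hg1def, hDdef]
  have hgd : Differentiable ℝ g := fun h => (hg h).differentiableAt
  have key : ∀ h : ℝ, 0 ≤ g h := by
    have hg0 : g 0 = 0 := by simp [hgdef, hDdef]
    intro h
    rcases le_or_gt 0 h with hh | hh
    · have hmono : MonotoneOn g (Set.Ici 0) := by
        apply monotoneOn_of_deriv_nonneg (convex_Ici 0) hgd.continuous.continuousOn
          hgd.differentiableOn
        intro x hx
        rw [(hg x).deriv, ← hg10]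
        exact hg1mono (le_of_lt (by simpa using hx))
      have := hmono (Set.self_mem_Ici) (Set.mem_Ici.2 hh) hh
      linarith [hg0 ▸ this]
    · have hanti : AntitoneOn g (Set.Iic 0) := by
        apply antitoneOn_of_deriv_nonpos (convex_Iic 0) hgd.continuous.continuousOn
          hgd.differentiableOn
        intro x hx
        rw [(hg x).deriv, ← hg10]
        exact hg1mono (le_of_lt (by simpa using hx))
      have := hanti (Set.mem_Iic.2 hh.le) (Set.self_mem_Iic) hh.le
      linarith [hg0 ▸ this]
  have := key t
  simp only [hgdef] at this
  linarith

lemma lemA (p : ℝ) (hp0 : 0 ≤ p) (hp1 : p ≤ 1) (t : ℝ) :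
    (1 - p) * Real.exp (-p * t) + p * Real.exp ((1 - p) * t) ≤ Real.exp (t ^ 2 / 8) := by
  have hDpos : 0 < 1 - p + p * Real.exp t := by
    rcases eq_or_lt_of_le hp1 with h1 | h1
    · simpa [h1] using Real.exp_pos t
    · have h2 : 0 ≤ p * Real.exp t := by positivity
      linarith
  have h1 : (1 - p) * Real.exp (-p * t) + p * Real.exp ((1 - p) * t)
      = Real.exp (-p * t) * (1 - p + p * Real.exp t) := by
    rw [show (1 - p) * t = -p * t + t by ring, Real.exp_add]
    ring
  rw [h1, ← Real.exp_log hDpos, ← Real.exp_add]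
  apply Real.exp_le_exp.2
  have := lemA_core p hp0 hp1 t
  linarith

/-- Finite Hoeffding lemma: mgf bound for a finitely supported mean-zero distribution. -/
lemma lemB {ι : Type*} [Fintype ι] (w u : ι → ℝ) (hw0 : ∀ i, 0 ≤ w i)
    (hw1 : ∑ i, w i = 1) (hmean : ∑ i, w i * u i = 0) {c A B : ℝ}
    (hA : ∀ i, A ≤ u i) (hB : ∀ i, u i ≤ B) (hAB : B - A ≤ c) (L : ℝ) :
    ∑ i, w i * Real.exp (L * u i) ≤ Real.exp (L ^ 2 * c ^ 2 / 8) := by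
  have hA0 : A ≤ 0 := by
    calc A = ∑ i, w i * A := by rw [← Finset.sum_mul, hw1, one_mul]
    _ ≤ ∑ i, w i * u i := Finset.sum_le_sum fun i _ => mul_le_mul_of_nonneg_left (hA i) (hw0 i)
    _ = 0 := hmean
  have hB0 : 0 ≤ B := by
    calc (0:ℝ) = ∑ i, w i * u i := hmean.symm
    _ ≤ ∑ i, w i * B := Finset.sum_le_sum fun i _ => mul_le_mul_of_nonneg_left (hB i) (hw0 i)
    _ = B := by rw [← Finset.sum_mul, hw1, one_mul]
  have hcnn : 0 ≤ B - A := by linarith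
  rcases eq_or_lt_of_le (show A ≤ B by linarith) with hABeq | hABlt
  · -- degenerate: A = B = 0, u ≡ 0
    have hA0' : A = 0 := le_antisymm hA0 (by linarith)
    have hu : ∀ i, u i = 0 := fun i => le_antisymm (by have := hB i; rw [← hABeq, hA0'] at this; exact this) (hA0' ▸ hA i)
    simp only [hu, mul_zero, Real.exp_zero, mul_one, hw1]
    exact Real.one_le_exp (by positivity)
  · set p : ℝ := -A / (B - A) with hpdef
    have hBA : 0 < B - A := by linarith
    have hp0 : 0 ≤ p := by apply div_nonneg <;> linarith
    have hp1 : p ≤ 1 := by rw [div_le_one hBA]; linarith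
    have h1p : 1 - p = B / (B - A) := by rw [hpdef]; field_simp; ring
    set t : ℝ := L * (B - A) with htdef
    have key : ∀ i, Real.exp (L * u i)
        ≤ (B - u i) / (B - A) * Real.exp (L * A) + (u i - A) / (B - A) * Real.exp (L * B) := by
      intro i
      have ha : (0:ℝ) ≤ (B - u i) / (B - A) := by apply div_nonneg; linarith [hB i]; linarith
      have hb : (0:ℝ) ≤ (u i - A) / (B - A) := by apply div_nonneg; linarith [hA i]; linarith
      have hab : (B - u i) / (B - A) + (u i - A) / (B - A) = 1 := by field_simp; ring
      have := convexOn_exp.2 (Set.mem_univ (L * A)) (Set.mem_univ (L * B)) ha hb hab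
      simp only [smul_eq_mul] at this
      have harg : (B - u i) / (B - A) * (L * A) + (u i - A) / (B - A) * (L * B) = L * u i := by
        field_simp; ring
      rw [harg] at this
      exact this
    calc ∑ i, w i * Real.exp (L * u i)
        ≤ ∑ i, w i * ((B - u i) / (B - A) * Real.exp (L * A) + (u i - A) / (B - A) * Real.exp (L * B)) :=
          Finset.sum_le_sum fun i _ => mul_le_mul_of_nonneg_left (key i) (hw0 i)
      _ = (1 - p) * Real.exp (-p * t) + p * Real.exp ((1 - p) * t) := by
          have e1 : -p * t = L * A := by rw [hpdef, htdef]; field_simp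
          have e2 : (1 - p) * t = L * B := by rw [h1p, htdef]; field_simp
          rw [e1, e2, h1p, hpdef]
          rw [Finset.sum_congr rfl (fun i _ => by ring :
            ∀ i ∈ Finset.univ, w i * ((B - u i) / (B - A) * Real.exp (L * A) + (u i - A) / (B - A) * Real.exp (L * B))
              = (w i * B - w i * u i) / (B - A) * Real.exp (L * A) + (w i * u i - w i * A) / (B - A) * Real.exp (L * B))]
          rw [Finset.sum_add_distrib, ← Finset.sum_mul, ← Finset.sum_mul]
          rw [← Finset.sum_div, ← Finset.sum_div, Finset.sum_sub_distrib, Finset.sum_sub_distrib,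
            ← Finset.sum_mul, ← Finset.sum_mul, hw1, hmean]
          ring
      _ ≤ Real.exp (t ^ 2 / 8) := lemA p hp0 hp1 t
      _ ≤ Real.exp (L ^ 2 * c ^ 2 / 8) := by
          apply Real.exp_le_exp.2
          rw [htdef, mul_pow]
          have : (B - A) ^ 2 ≤ c ^ 2 := by nlinarith
          nlinarith [sq_nonneg L]

/-- One-sided Chernoff bound on the tuple space. -/
lemma lemC {ι : Type*} [Fintype ι] {N : ℕ} (hN : 0 < N) (w u : ι → ℝ) (hw0 : ∀ i, 0 ≤ w i)
    (hw1 : ∑ i, w i = 1) (hmean : ∑ i, w i * u i = 0) {c A B : ℝ}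
    (hA : ∀ i, A ≤ u i) (hB : ∀ i, u i ≤ B) (hAB : B - A ≤ c) (hc : 0 < c)
    {a : ℝ} (ha : 0 < a) :
    ∑ t ∈ Finset.univ.filter (fun t : Fin N → ι => (N : ℝ) * a ≤ ∑ i, u (t i)),
        ∏ i, w (t i)
      ≤ Real.exp (-(2 * N * a ^ 2) / c ^ 2) := by
  classical
  set L : ℝ := 4 * a / c ^ 2 with hLdef
  have hL : 0 < L := by positivity
  have step1 : ∀ t ∈ Finset.univ.filter (fun t : Fin N → ι => (N : ℝ) * a ≤ ∑ i, u (t i)),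
      ∏ i, w (t i) ≤ Real.exp (-(L * N * a)) * ∏ i, (w (t i) * Real.exp (L * u (t i))) := by
    intro t ht
    rw [Finset.mem_filter] at ht
    have h2 : ∏ i, (w (t i) * Real.exp (L * u (t i)))
        = (∏ i, w (t i)) * Real.exp (L * ∑ i, u (t i)) := by
      rw [Finset.prod_mul_distrib, ← Real.exp_sum, Finset.mul_sum]
    rw [h2, ← mul_assoc, mul_comm (Real.exp _), mul_assoc, ← Real.exp_add]
    nth_rewrite 1 [show ∏ i, w (t i) = (∏ i, w (t i)) * 1 by ring]
    apply mul_le_mul_of_nonneg_left _ (Finset.prod_nonneg fun i _ => hw0 _)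
    rw [← Real.exp_zero]
    apply Real.exp_le_exp.2
    have := mul_le_mul_of_nonneg_left ht.2 hL.le
    linarith
  calc ∑ t ∈ Finset.univ.filter (fun t : Fin N → ι => (N : ℝ) * a ≤ ∑ i, u (t i)), ∏ i, w (t i)
      ≤ ∑ t ∈ Finset.univ.filter (fun t : Fin N → ι => (N : ℝ) * a ≤ ∑ i, u (t i)),
          Real.exp (-(L * N * a)) * ∏ i, (w (t i) * Real.exp (L * u (t i))) :=
        Finset.sum_le_sum step1
    _ ≤ ∑ t : Fin N → ι, Real.exp (-(L * N * a)) * ∏ i, (w (t i) * Real.exp (L * u (t i))) := by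
        apply Finset.sum_le_sum_of_subset_of_nonneg (Finset.filter_subset _ _)
        intro t _ _
        exact mul_nonneg (Real.exp_nonneg _)
          (Finset.prod_nonneg fun i _ => mul_nonneg (hw0 _) (Real.exp_nonneg _))
    _ = Real.exp (-(L * N * a)) * ∑ t : Fin N → ι, ∏ i, (w (t i) * Real.exp (L * u (t i))) := by
        rw [Finset.mul_sum]
    _ = Real.exp (-(L * N * a)) * (∑ j, w j * Real.exp (L * u j)) ^ N := by
        congr 1
        have h4 : (∑ j, w j * Real.exp (L * u j)) ^ N
            = ∏ _i : Fin N, ∑ j, w j * Real.exp (L * u j) := by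
          simp [Finset.prod_const]
        rw [h4, Finset.prod_univ_sum]
        rw [Fintype.piFinset_univ]
    _ ≤ Real.exp (-(L * N * a)) * Real.exp (L ^ 2 * c ^ 2 / 8) ^ N := by
        apply mul_le_mul_of_nonneg_left _ (Real.exp_nonneg _)
        apply pow_le_pow_left₀ _ (lemB w u hw0 hw1 hmean hA hB hAB L)
        apply Finset.sum_nonneg fun j _ => mul_nonneg (hw0 j) (Real.exp_nonneg _)
    _ = Real.exp (-(2 * N * a ^ 2) / c ^ 2) := by
        rw [← Real.exp_nat_mul, ← Real.exp_add]
        congr 1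
        rw [hLdef]
        field_simp
        ring

lemma lemD {ι : Type*} [Fintype ι] {N : ℕ} (hN : 0 < N) (w u : ι → ℝ) (hw0 : ∀ i, 0 ≤ w i)
    (hw1 : ∑ i, w i = 1) (hmean : ∑ i, w i * u i = 0) {c A B : ℝ}
    (hA : ∀ i, A ≤ u i) (hB : ∀ i, u i ≤ B) (hAB : B - A ≤ c) (hc : 0 < c)
    {a : ℝ} (ha : 0 < a) :
    ∑ t ∈ Finset.univ.filter (fun t : Fin N → ι => ¬ |(1 / N : ℝ) * ∑ i, u (t i)| ≤ a),
        ∏ i, w (t i)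
      ≤ 2 * Real.exp (-(2 * N * a ^ 2) / c ^ 2) := by
  classical
  have hNpos : (0:ℝ) < N := Nat.cast_pos.2 hN
  set f1 : Finset (Fin N → ι) := Finset.univ.filter (fun t => (N : ℝ) * a ≤ ∑ i, u (t i)) with hf1
  set f2 : Finset (Fin N → ι) := Finset.univ.filter (fun t => (N : ℝ) * a ≤ ∑ i, (-u) (t i)) with hf2
  have hsub : Finset.univ.filter (fun t : Fin N → ι => ¬ |(1 / N : ℝ) * ∑ i, u (t i)| ≤ a)
      ⊆ f1 ∪ f2 := by
    intro t ht
    rw [Finset.mem_filter] at ht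
    rw [Finset.mem_union, hf1, hf2, Finset.mem_filter, Finset.mem_filter]
    have h1 := ht.2
    rw [not_le] at h1
    have hinv : (N:ℝ) * (1 / N) = 1 := by field_simp
    rcases lt_abs.1 h1 with h | h
    · left
      refine ⟨Finset.mem_univ _, ?_⟩
      have h2 := mul_lt_mul_of_pos_left h hNpos
      rw [← mul_assoc, hinv, one_mul] at h2
      linarith
    · right
      refine ⟨Finset.mem_univ _, ?_⟩
      have hs : ∑ i, (-u) (t i) = -∑ i, u (t i) := by simp
      rw [hs]
      have h2 := mul_lt_mul_of_pos_left h hNpos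
      rw [mul_neg, ← mul_assoc, hinv, one_mul] at h2
      linarith
  have hnn : ∀ t : Fin N → ι, 0 ≤ ∏ i, w (t i) := fun t =>
    Finset.prod_nonneg fun i _ => hw0 _
  calc ∑ t ∈ Finset.univ.filter (fun t : Fin N → ι => ¬ |(1 / N : ℝ) * ∑ i, u (t i)| ≤ a),
        ∏ i, w (t i)
      ≤ ∑ t ∈ f1 ∪ f2, ∏ i, w (t i) :=
        Finset.sum_le_sum_of_subset_of_nonneg hsub fun t _ _ => hnn t
    _ ≤ (∑ t ∈ f1, ∏ i, w (t i)) + ∑ t ∈ f2, ∏ i, w (t i) := by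
        have := Finset.sum_union_inter (s₁ := f1) (s₂ := f2) (f := fun t => ∏ i, w (t i))
        have h2 : 0 ≤ ∑ t ∈ f1 ∩ f2, ∏ i, w (t i) := Finset.sum_nonneg fun t _ => hnn t
        linarith
    _ ≤ Real.exp (-(2 * N * a ^ 2) / c ^ 2) + Real.exp (-(2 * N * a ^ 2) / c ^ 2) := by
        apply add_le_add
        · exact lemC hN w u hw0 hw1 hmean hA hB hAB hc ha
        · exact lemC hN w (-u) hw0 hw1
            (by simp only [Pi.neg_apply, mul_neg, ← Finset.sum_neg_distrib]; simp [hmean])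
            (A := -B) (B := -A)
            (fun i => by simpa using neg_le_neg (hB i))
            (fun i => by simpa using neg_le_neg (hA i)) (by linarith) hc ha
    _ = 2 * Real.exp (-(2 * N * a ^ 2) / c ^ 2) := by ring

/-- Resampling error estimate: with probability at least `1 − 2 exp(−2Na²/‖h‖²_osc)`, the
empirical average of `h` over the resampled points `yⁱ = x^{Jⁱ}` is close to `∫ h q`,
up to the two displayed bias terms and `a`.  The resampled indices `J i` are,
conditionally on the first-stage randomness `ω₁` (which determines the points `x i`),
i.i.d. with `P(J i = j) = r̃(x^j)/Σₙ r̃(xⁿ)` where `r̃ = q̃/p̃`. -/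
theorem stmt_6 {𝒳 : Type*} [MeasurableSpace 𝒳] (μ : Measure 𝒳)
    {Ω₁ Ω₂ : Type*} [MeasurableSpace Ω₁] [MeasurableSpace Ω₂]
    (μ₁ : Measure Ω₁) (μ₂ : Measure Ω₂)
    [IsProbabilityMeasure μ₁] [IsProbabilityMeasure μ₂]
    (N : ℕ) (hN : 0 < N)
    (ptil qtil : 𝒳 → ℝ)
    (hp0 : ∀ z, 0 ≤ ptil z) (hq0 : ∀ z, 0 ≤ qtil z)
    (hpint : Integrable ptil μ) (hqint : Integrable qtil μ)
    (hppos : 0 < ∫ z, ptil z ∂μ) (hqpos : 0 < ∫ z, qtil z ∂μ)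
    (x : Fin N → Ω₁ → 𝒳)
    (J : Fin N → Ω₁ × Ω₂ → Fin N)
    (y : Fin N → Ω₁ × Ω₂ → 𝒳)
    (hy : ∀ i ω, y i ω = x (J i ω) ω.1)
    (hcondIndep : ∀ ω₁ : Ω₁,
      iIndepFun (fun i ω₂ => J i (ω₁, ω₂)) μ₂)
    (hcondLaw : ∀ (ω₁ : Ω₁) (i j : Fin N),
      (μ₂ {ω₂ | J i (ω₁, ω₂) = j}).toReal
        = (qtil (x j ω₁) / ptil (x j ω₁)) / ∑ n : Fin N, qtil (x n ω₁) / ptil (x n ω₁))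
    (h : 𝒳 → ℝ) (hosc a : ℝ) (hosc_pos : 0 < hosc) (ha : 0 < a)
    (hhosc : ∀ z w, |h z - h w| ≤ hosc) :
    ENNReal.ofReal (1 - 2 * Real.exp (-(2 * N * a ^ 2) / hosc ^ 2))
      ≤ (μ₁.prod μ₂) {ω |
          |(1 / N : ℝ) * ∑ i : Fin N, h (y i ω) - ∫ z, h z * (qtil z / ∫ w, qtil w ∂μ) ∂μ|
            ≤ (⨆ z : 𝒳, |h z - ∫ w, h w * (qtil w / ∫ v, qtil v ∂μ) ∂μ|) *
                |1 - (1 / N : ℝ) * ∑ i : Fin N,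
                  (qtil (x i ω.1) / ∫ w, qtil w ∂μ) / (ptil (x i ω.1) / ∫ w, ptil w ∂μ)|
              + |(1 / N : ℝ) * ∑ i : Fin N,
                  ((qtil (x i ω.1) / ∫ w, qtil w ∂μ) / (ptil (x i ω.1) / ∫ w, ptil w ∂μ)) *
                    (h (x i ω.1) - ∫ w, h w * (qtil w / ∫ v, qtil v ∂μ) ∂μ)|
              + a} := by
  classical
  have hNR : (0:ℝ) < N := Nat.cast_pos.2 hN
  have hNinv : (N:ℝ) * (1 / N) = 1 := by field_simp
  set Qint : ℝ := ∫ z, qtil z ∂μ with hQint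
  set Pint : ℝ := ∫ z, ptil z ∂μ with hPint
  set m : ℝ := ∫ z, h z * (qtil z / Qint) ∂μ with hm
  set M : ℝ := ⨆ z : 𝒳, |h z - m| with hM
  set c : ℝ := 2 * Real.exp (-(2 * N * a ^ 2) / hosc ^ 2) with hcdef
  have hc0 : 0 ≤ c := by positivity
  set E : Set (Ω₁ × Ω₂) := {ω |
          |(1 / N : ℝ) * ∑ i : Fin N, h (y i ω) - m|
            ≤ M * |1 - (1 / N : ℝ) * ∑ i : Fin N,
                  (qtil (x i ω.1) / Qint) / (ptil (x i ω.1) / Pint)|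
              + |(1 / N : ℝ) * ∑ i : Fin N,
                  ((qtil (x i ω.1) / Qint) / (ptil (x i ω.1) / Pint)) * (h (x i ω.1) - m)|
              + a} with hE
  show ENNReal.ofReal (1 - c) ≤ (μ₁.prod μ₂) E
  rw [measure_eq_iInf]
  refine le_iInf fun U => le_iInf fun hEU => le_iInf fun hU => ?_
  rw [Measure.prod_apply hU]
  have key : ∀ ω₁, ENNReal.ofReal (1 - c) ≤ μ₂ (Prod.mk ω₁ ⁻¹' U) := by
    intro ω₁
    set rt : Fin N → ℝ := fun j => qtil (x j ω₁) / ptil (x j ω₁) with hrt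
    set s : ℝ := ∑ n, rt n with hs
    have hrt0 : ∀ j, 0 ≤ rt j := fun j => div_nonneg (hq0 _) (hp0 _)
    have hs0 : 0 ≤ s := Finset.sum_nonneg fun j _ => hrt0 j
    have hlaw : ∀ i j, (μ₂ {ω₂ | J i (ω₁, ω₂) = j}) = ENNReal.ofReal (rt j / s) := by
      intro i j
      rw [← ENNReal.ofReal_toReal (measure_ne_top μ₂ _), hcondLaw ω₁ i j]
    have hspos : 0 < s := by
      rcases hs0.eq_or_lt with h0 | h0
      · exfalso
        have i0 : Fin N := ⟨0, hN⟩
        have hcover : (Set.univ : Set Ω₂) = ⋃ j : Fin N, {ω₂ | J i0 (ω₁, ω₂) = j} := by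
          ext ω₂; simp
        have h1 : (1:ENNReal) ≤ ∑' j : Fin N, μ₂ {ω₂ | J i0 (ω₁, ω₂) = j} := by
          calc (1:ENNReal) = μ₂ Set.univ := measure_univ.symm
            _ = μ₂ (⋃ j : Fin N, {ω₂ | J i0 (ω₁, ω₂) = j}) := by rw [← hcover]
            _ ≤ ∑' j : Fin N, μ₂ {ω₂ | J i0 (ω₁, ω₂) = j} := measure_iUnion_le _
        rw [tsum_fintype] at h1
        have h2 : ∀ j : Fin N, μ₂ {ω₂ | J i0 (ω₁, ω₂) = j} = 0 := by
          intro j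
          rw [hlaw i0 j, ← h0]
          simp
        simp only [h2, Finset.sum_const_zero] at h1
        exact (by norm_num : ¬ ((1:ENNReal) ≤ 0)) h1
      · exact h0
    set w : Fin N → ℝ := fun j => rt j / s with hwdef
    have hw0 : ∀ j, 0 ≤ w j := fun j => div_nonneg (hrt0 j) hs0
    have hw1 : ∑ j, w j = 1 := by
      rw [hwdef, ← Finset.sum_div, ← hs]
      exact div_self hspos.ne'
    set v : Fin N → ℝ := fun j => h (x j ω₁) with hv
    set cm : ℝ := ∑ j, w j * v j with hcm
    set u : Fin N → ℝ := fun j => v j - cm with hu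
    have hmean : ∑ j, w j * u j = 0 := by
      simp only [hu, mul_sub]
      rw [Finset.sum_sub_distrib, ← Finset.sum_mul, hw1, one_mul, ← hcm, sub_self]
    have hne : (Finset.univ : Finset (Fin N)).Nonempty := ⟨⟨0, hN⟩, Finset.mem_univ _⟩
    set A : ℝ := Finset.univ.inf' hne v - cm with hAdef
    set B : ℝ := Finset.univ.sup' hne v - cm with hBdef
    have hA : ∀ j, A ≤ u j := fun j =>
      sub_le_sub_right (Finset.inf'_le v (Finset.mem_univ j)) cm
    have hB : ∀ j, u j ≤ B := fun j =>
      sub_le_sub_right (Finset.le_sup' v (Finset.mem_univ j)) cm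
    have hAB : B - A ≤ hosc := by
      obtain ⟨j1, _, hj1⟩ := Finset.exists_mem_eq_sup' hne v
      obtain ⟨j2, _, hj2⟩ := Finset.exists_mem_eq_inf' hne v
      have h3 := hhosc (x j1 ω₁) (x j2 ω₁)
      have h4 : B - A = v j1 - v j2 := by rw [hAdef, hBdef, hj1, hj2]; ring
      have h5 : v j1 - v j2 ≤ |v j1 - v j2| := le_abs_self _
      rw [h4]
      exact le_trans h5 (h3)
    set Bad : Set Ω₂ := {ω₂ | ¬ |(1 / N : ℝ) * ∑ i, u (J i (ω₁, ω₂))| ≤ a} with hBad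
    set badT : Finset (Fin N → Fin N) :=
      Finset.univ.filter (fun t : Fin N → Fin N => ¬ |(1 / N : ℝ) * ∑ i, u (t i)| ≤ a) with hbadT
    have hBadsub : Bad ⊆ ⋃ t ∈ badT, ⋂ i, {ω₂ | J i (ω₁, ω₂) = t i} := by
      intro ω₂ hω₂
      refine Set.mem_biUnion (show (fun i => J i (ω₁, ω₂)) ∈ badT from ?_) ?_
      · rw [hbadT, Finset.mem_filter]
        exact ⟨Finset.mem_univ _, hω₂⟩
      · simp
    have hprodmeas : ∀ t : Fin N → Fin N,
        μ₂ (⋂ i, {ω₂ | J i (ω₁, ω₂) = t i}) = ENNReal.ofReal (∏ i, w (t i)) := by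
      intro t
      have hindep := (iIndepFun_iff_measure_inter_preimage_eq_mul.mp (hcondIndep ω₁))
        Finset.univ (sets := fun i => {t i}) (fun i _ => MeasurableSet.of_discrete)
      have hsets : (⋂ i ∈ Finset.univ, (fun ω₂ => J i (ω₁, ω₂)) ⁻¹' {t i})
          = ⋂ i, {ω₂ | J i (ω₁, ω₂) = t i} := by
        ext ω₂; simp [Set.mem_iInter]
      rw [hsets] at hindep
      rw [hindep]
      have : ∀ i : Fin N, μ₂ ((fun ω₂ => J i (ω₁, ω₂)) ⁻¹' {t i}) = ENNReal.ofReal (w (t i)) := by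
        intro i
        have : ((fun ω₂ => J i (ω₁, ω₂)) ⁻¹' {t i}) = {ω₂ | J i (ω₁, ω₂) = t i} := by
          ext ω₂; simp
        rw [this, hlaw i (t i)]
      rw [Finset.prod_congr rfl fun i _ => this i]
      rw [← ENNReal.ofReal_prod_of_nonneg fun i _ => hw0 (t i)]
    have hBadle : μ₂ Bad ≤ ENNReal.ofReal c := by
      calc μ₂ Bad ≤ μ₂ (⋃ t ∈ badT, ⋂ i, {ω₂ | J i (ω₁, ω₂) = t i}) := measure_mono hBadsub
        _ ≤ ∑ t ∈ badT, μ₂ (⋂ i, {ω₂ | J i (ω₁, ω₂) = t i}) := measure_biUnion_finset_le _ _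
        _ = ∑ t ∈ badT, ENNReal.ofReal (∏ i, w (t i)) :=
            Finset.sum_congr rfl fun t _ => hprodmeas t
        _ = ENNReal.ofReal (∑ t ∈ badT, ∏ i, w (t i)) :=
            (ENNReal.ofReal_sum_of_nonneg fun t _ =>
              Finset.prod_nonneg fun i _ => hw0 _).symm
        _ ≤ ENNReal.ofReal c := by
            apply ENNReal.ofReal_le_ofReal
            rw [hcdef, hbadT]
            exact lemD hN w u hw0 hw1 hmean hA hB hAB hosc_pos ha
    -- the good event is contained in the section of E
    have hGood : Badᶜ ⊆ Prod.mk ω₁ ⁻¹' U := by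
      refine subset_trans ?_ (Set.preimage_mono hEU)
      intro ω₂ hω₂
      simp only [hBad, Set.mem_compl_iff, Set.mem_setOf_eq, not_not] at hω₂
      -- the pointwise estimate
      simp only [hE, Set.mem_preimage, Set.mem_setOf_eq]
      set r : Fin N → ℝ := fun i => (qtil (x i ω₁) / Qint) / (ptil (x i ω₁) / Pint) with hr
      set R : ℝ := (1 / N : ℝ) * ∑ i, r i with hR
      have hri : ∀ i, r i = (Pint / Qint) * rt i := by
        intro i
        rw [hr, hrt]
        simp only [div_eq_mul_inv, mul_inv, inv_inv]
        ring
      have hbdd : BddAbove (Set.range fun z => |h z - m|) := by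
        refine ⟨|h (x ⟨0, hN⟩ ω₁) - m| + hosc, ?_⟩
        rintro _ ⟨z, rfl⟩
        have h1 := hhosc z (x ⟨0, hN⟩ ω₁)
        have h2 := abs_sub_le (h z) (h (x ⟨0, hN⟩ ω₁)) m
        linarith
    -- supremum bounds each |v j - m|
      have hvM : ∀ j, |v j - m| ≤ M := fun j => le_ciSup hbdd (x j ω₁)
      have hcmM : |cm - m| ≤ M := by
        have h1 : cm - m = ∑ j, w j * (v j - m) := by
          simp only [mul_sub]
          rw [Finset.sum_sub_distrib, ← Finset.sum_mul, hw1, one_mul, ← hcm]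
        rw [h1]
        calc |∑ j, w j * (v j - m)| ≤ ∑ j, |w j * (v j - m)| := Finset.abs_sum_le_sum_abs _ _
          _ ≤ ∑ j, w j * M := by
              apply Finset.sum_le_sum
              intro j _
              rw [abs_mul, abs_of_nonneg (hw0 j)]
              exact mul_le_mul_of_nonneg_left (hvM j) (hw0 j)
          _ = M := by rw [← Finset.sum_mul, hw1, one_mul]
      have hcms : cm * s = ∑ j, rt j * v j := by
        rw [hcm, Finset.sum_mul]
        apply Finset.sum_congr rfl
        intro j _
        rw [hwdef]
        field_simp
      have hbias : |cm - m| ≤ M * |1 - R| + |(1 / N : ℝ) * ∑ i, r i * (v i - m)| := by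
        have hsr : ∑ i, r i = (Pint / Qint) * s := by
          rw [Finset.sum_congr rfl fun i _ => hri i, ← Finset.mul_sum, hs]
        have hsrv : ∑ i, r i * (v i - m) = (Pint / Qint) * (cm * s - m * s) := by
          have e1 : ∀ i ∈ Finset.univ, r i * (v i - m)
              = (Pint / Qint) * (rt i * v i - rt i * m) := fun i _ => by rw [hri i]; ring
          rw [Finset.sum_congr rfl e1, ← Finset.mul_sum, Finset.sum_sub_distrib,
            ← Finset.sum_mul, ← hcms]
          have e2 : (∑ n, rt n) = s := hs.symm
          rw [e2]
          ring
        have hid : cm - m = (cm - m) * (1 - R) + (1 / N : ℝ) * ∑ i, r i * (v i - m) := by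
          rw [hsrv, hR, hsr]
          ring
        calc |cm - m| = |(cm - m) * (1 - R) + (1 / N : ℝ) * ∑ i, r i * (v i - m)| := by
              rw [← hid]
          _ ≤ |(cm - m) * (1 - R)| + |(1 / N : ℝ) * ∑ i, r i * (v i - m)| := abs_add_le _ _
          _ ≤ M * |1 - R| + |(1 / N : ℝ) * ∑ i, r i * (v i - m)| := by
              rw [abs_mul]
              exact add_le_add_left (mul_le_mul_of_nonneg_right hcmM (abs_nonneg _)) _
      -- empirical average identity
      have hsumy : (1 / N : ℝ) * ∑ i, h (y i (ω₁, ω₂)) = (1 / N : ℝ) * ∑ i, v (J i (ω₁, ω₂)) := by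
        congr 1
        apply Finset.sum_congr rfl
        intro i _
        rw [hy i (ω₁, ω₂), hv]
      have hsplit : (1 / N : ℝ) * ∑ i, v (J i (ω₁, ω₂))
          = (1 / N : ℝ) * ∑ i, u (J i (ω₁, ω₂)) + cm := by
        simp only [hu]
        rw [Finset.sum_sub_distrib, Finset.sum_const, Finset.card_univ, Fintype.card_fin]
        rw [mul_sub]
        have : (1 / N : ℝ) * (N • cm) = cm := by
          rw [nsmul_eq_mul]
          rw [← mul_assoc]
          rw [show (1 / N : ℝ) * N = 1 by field_simp, one_mul]
        rw [this]
        ring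
      rw [hsumy, hsplit]
      have habs : |(1 / N : ℝ) * ∑ i, u (J i (ω₁, ω₂)) + cm - m|
          ≤ |(1 / N : ℝ) * ∑ i, u (J i (ω₁, ω₂))| + |cm - m| := by
        have := abs_add_le ((1 / N : ℝ) * ∑ i, u (J i (ω₁, ω₂))) (cm - m)
        calc |(1 / N : ℝ) * ∑ i, u (J i (ω₁, ω₂)) + cm - m|
            = |(1 / N : ℝ) * ∑ i, u (J i (ω₁, ω₂)) + (cm - m)| := by ring_nf
          _ ≤ _ := this
      refine le_trans habs ?_
      have := add_le_add hω₂ hbias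
      show _ ≤ M * |1 - R| + |(1 / N : ℝ) * ∑ i, r i * (v i - m)| + a
      linarith
    -- conclude for this ω₁
    have h1 : (1:ENNReal) ≤ μ₂ Badᶜ + ENNReal.ofReal c := by
      calc (1:ENNReal) = μ₂ Set.univ := measure_univ.symm
        _ = μ₂ (Badᶜ ∪ Bad) := by rw [Set.compl_union_self]
        _ ≤ μ₂ Badᶜ + μ₂ Bad := measure_union_le _ _
        _ ≤ μ₂ Badᶜ + ENNReal.ofReal c := add_le_add_right hBadle _
    have h2 : ENNReal.ofReal (1 - c) ≤ μ₂ Badᶜ := by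
      rcases le_or_gt (1 - c) 0 with h3 | h3
      · rw [ENNReal.ofReal_of_nonpos h3]; exact zero_le
      · have h4 : ENNReal.ofReal (1 - c) = 1 - ENNReal.ofReal c := by
          rw [ENNReal.ofReal_sub 1 hc0, ENNReal.ofReal_one]
        rw [h4]
        exact tsub_le_iff_right.2 h1
      
    exact le_trans h2 (measure_mono hGood)
  calc ENNReal.ofReal (1 - c) = ∫⁻ _ω₁, ENNReal.ofReal (1 - c) ∂μ₁ := by
        rw [lintegral_const, measure_univ, mul_one]
    _ ≤ ∫⁻ ω₁, μ₂ (Prod.mk ω₁ ⁻¹' U) ∂μ₁ := lintegral_mono key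
end

section
/- Let U : ℝ^d → ℝ be continuous, K ⊆ ℝ^d measurable, and K̃ ⊆ K a nonempty measurable set with positive Lebesgue measure such that sup_{x∈K̃} U(x) ≤ inf_{y∈Kᶜ} U(y) − C_K for some constant C_K > 0. Define π_ε(A) = ∫_A e^{−U/ε} dx / ∫_{ℝ^d} e^{−U/ε} dx, and assume ∫ e^{−U} dx < ∞ and ∫ e^{−U/ε} dx < ∞. Then for every 0 < ε < 1: π_ε(K) ≥ 1 − C_P exp(−C_K/ε), where C_P = exp(C_K) · π_1(Kᶜ)/π_1(K̃). -/
open MeasureTheory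

/-- Low-temperature concentration of the Gibbs measure on the sublevel region `K`:
`π_ε(K) ≥ 1 − C_P e^{−C_K/ε}` with `C_P = e^{C_K} π₁(Kᶜ)/π₁(K̃)`. -/
theorem stmt_9 (d : ℕ)
    (U : EuclideanSpace ℝ (Fin d) → ℝ) (hU : Continuous U)
    (K Ktil : Set (EuclideanSpace ℝ (Fin d)))
    (hKmeas : MeasurableSet K) (hKtilmeas : MeasurableSet Ktil)
    (hsub : Ktil ⊆ K) (hKtilpos : 0 < volume Ktil)
    (CK : ℝ) (hCK : 0 < CK)
    (hsep : ∀ x ∈ Ktil, ∀ y ∈ Kᶜ, U x ≤ U y - CK)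
    (hint1 : Integrable (fun x => Real.exp (-U x)))
    (hintε : ∀ ε : ℝ, 0 < ε → ε < 1 → Integrable (fun x => Real.exp (-U x / ε))) :
    ∀ ε : ℝ, 0 < ε → ε < 1 →
      (∫ x in K, Real.exp (-U x / ε)) / (∫ x, Real.exp (-U x / ε))
        ≥ 1 - (Real.exp CK *
            ((∫ x in Kᶜ, Real.exp (-U x)) / (∫ x, Real.exp (-U x))) /
            ((∫ x in Ktil, Real.exp (-U x)) / (∫ x, Real.exp (-U x)))) *
          Real.exp (-CK / ε) := by
  intro ε hε hε1
  have hintε' := hintε ε hε hε1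
  have hnn1 : 0 ≤ᶠ[ae volume] fun x => Real.exp (-U x) :=
    Filter.Eventually.of_forall fun x => (Real.exp_pos _).le
  have hnnε : 0 ≤ᶠ[ae volume] fun x => Real.exp (-U x / ε) :=
    Filter.Eventually.of_forall fun x => (Real.exp_pos _).le
  -- positivity of the various integrals
  have hsupp1 : Function.support (fun x : EuclideanSpace ℝ (Fin d) => Real.exp (-U x)) = Set.univ := by
    ext x; simp [Function.mem_support, (Real.exp_pos _).ne']
  have hsuppε : Function.support (fun x : EuclideanSpace ℝ (Fin d) => Real.exp (-U x / ε)) = Set.univ := by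
    ext x; simp [Function.mem_support, (Real.exp_pos _).ne']
  have hZ1 : 0 < ∫ x, Real.exp (-U x) := by
    rw [integral_pos_iff_support_of_nonneg_ae hnn1 hint1, hsupp1]
    exact hKtilpos.trans_le (measure_mono (Set.subset_univ _))
  have hKtil1 : 0 < ∫ x in Ktil, Real.exp (-U x) := by
    rw [setIntegral_pos_iff_support_of_nonneg_ae (ae_restrict_of_ae hnn1) hint1.integrableOn,
      hsupp1, Set.univ_inter]
    exact hKtilpos
  have hKtilε : 0 < ∫ x in Ktil, Real.exp (-U x / ε) := by
    rw [setIntegral_pos_iff_support_of_nonneg_ae (ae_restrict_of_ae hnnε) hintε'.integrableOn,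
      hsuppε, Set.univ_inter]
    exact hKtilpos
  have hZε : 0 < ∫ x, Real.exp (-U x / ε) :=
    hKtilε.trans_le (setIntegral_le_integral hintε' hnnε)
  have hIc : 0 ≤ ∫ x in Kᶜ, Real.exp (-U x) :=
    setIntegral_nonneg hKmeas.compl fun x _ => (Real.exp_pos _).le
  -- the constant simplifies
  have hconst : Real.exp CK *
      ((∫ x in Kᶜ, Real.exp (-U x)) / (∫ x, Real.exp (-U x))) /
      ((∫ x in Ktil, Real.exp (-U x)) / (∫ x, Real.exp (-U x)))
      = Real.exp CK * (∫ x in Kᶜ, Real.exp (-U x)) / (∫ x in Ktil, Real.exp (-U x)) := by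
    field_simp
  rw [hconst]
  -- split into K and Kᶜ
  have hsplit : ∫ x in K, Real.exp (-U x / ε)
      = (∫ x, Real.exp (-U x / ε)) - ∫ x in Kᶜ, Real.exp (-U x / ε) := by
    rw [← integral_add_compl hKmeas hintε']; ring
  rw [hsplit, ge_iff_le, sub_div, div_self hZε.ne']
  rw [sub_le_sub_iff_left, div_le_iff₀ hZε]
  -- key estimate
  rcases Set.eq_empty_or_nonempty Kᶜ with hKc | hKc
  · rw [hKc]
    simp only [Measure.restrict_empty, integral_zero_measure]
    positivity
  · -- infimum of U on Kᶜ
    have hKtilne : Ktil.Nonempty := by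
      rcases Set.eq_empty_or_nonempty Ktil with h | h
      · rw [h] at hKtilpos; simp at hKtilpos
      · exact h
    obtain ⟨x0, hx0⟩ := hKtilne
    set t : ℝ := sInf (U '' Kᶜ) with ht
    have hbdd : BddBelow (U '' Kᶜ) := by
      refine ⟨U x0 + CK, ?_⟩
      rintro _ ⟨y, hy, rfl⟩
      have := hsep x0 hx0 y hy
      linarith
    have htle : ∀ y ∈ Kᶜ, t ≤ U y := fun y hy => csInf_le hbdd ⟨y, hy, rfl⟩
    have hUle : ∀ x ∈ Ktil, U x ≤ t - CK := by
      intro x hx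
      have : U x + CK ≤ t := by
        apply le_csInf (hKc.image U)
        rintro _ ⟨y, hy, rfl⟩
        have := hsep x hx y hy
        linarith
      linarith
    have h1ε : (1 : ℝ) - 1 / ε ≤ 0 := by
      have : (1 : ℝ) ≤ 1 / ε := by
        rw [le_div_iff₀ hε]; linarith
      linarith
    set A : ℝ := Real.exp ((1 - 1/ε) * t) with hA
    set B : ℝ := Real.exp ((1 - 1/ε) * (t - CK)) with hB
    -- pointwise bounds
    have h1 : ∫ x in Kᶜ, Real.exp (-U x / ε) ≤ A * ∫ x in Kᶜ, Real.exp (-U x) := by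
      rw [← integral_const_mul]
      apply setIntegral_mono_on hintε'.integrableOn
        (hint1.const_mul A).integrableOn hKmeas.compl
      intro y hy
      rw [hA, ← Real.exp_add]
      apply Real.exp_le_exp.2
      have key : -U y / ε = (1 - 1/ε) * U y - U y := by field_simp; ring
      have hmul : (1 - 1/ε) * U y ≤ (1 - 1/ε) * t :=
        mul_le_mul_of_nonpos_left (htle y hy) h1ε
      linarith
    have h2 : B * (∫ x in Ktil, Real.exp (-U x)) ≤ ∫ x in Ktil, Real.exp (-U x / ε) := by
      rw [← integral_const_mul]
      apply setIntegral_mono_on (hint1.const_mul B).integrableOn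
        hintε'.integrableOn hKtilmeas
      intro x hx
      rw [hB, ← Real.exp_add]
      apply Real.exp_le_exp.2
      have key : -U x / ε = (1 - 1/ε) * U x - U x := by field_simp; ring
      have hmul : (1 - 1/ε) * (t - CK) ≤ (1 - 1/ε) * U x :=
        mul_le_mul_of_nonpos_left (hUle x hx) h1ε
      linarith
    set C : ℝ := Real.exp CK * (∫ x in Kᶜ, Real.exp (-U x)) /
        (∫ x in Ktil, Real.exp (-U x)) * Real.exp (-CK / ε) with hC
    have hC0 : 0 ≤ C := by positivity
    have hAB : A * (∫ x in Kᶜ, Real.exp (-U x))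
        = C * (B * ∫ x in Ktil, Real.exp (-U x)) := by
      rw [hC, hA, hB]
      have hexp : Real.exp ((1 - 1/ε) * t)
          = Real.exp CK * Real.exp (-CK / ε) * Real.exp ((1 - 1/ε) * (t - CK)) := by
        rw [← Real.exp_add, ← Real.exp_add]
        congr 1
        field_simp
        ring
      rw [hexp]
      field_simp
    calc ∫ x in Kᶜ, Real.exp (-U x / ε)
        ≤ A * ∫ x in Kᶜ, Real.exp (-U x) := h1
      _ = C * (B * ∫ x in Ktil, Real.exp (-U x)) := hAB
      _ ≤ C * ∫ x in Ktil, Real.exp (-U x / ε) := mul_le_mul_of_nonneg_left h2 hC0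
      _ ≤ C * ∫ x, Real.exp (-U x / ε) :=
          mul_le_mul_of_nonneg_left (setIntegral_le_integral hintε' hnnε) hC0
end
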